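/- For n ≥ 3, the middle graph M(P_n) of the path does not admit a J-colouring. -/

import Mathlib

open SimpleGraph

/-- A proper colouring of `G` with `k` colours in which every vertex's closed
neighbourhood meets every colour class (a J-colouring). -/
def IsJCol {V : Type*} (G : SimpleGraph V) {k : ℕ} (c : V → Fin k) : Prop :=
  (∀ u v, G.Adj u v → c u ≠ c v) ∧
  (∀ v : V, ∀ i : Fin k, ∃ u, (u = v ∨ G.Adj v u) ∧ c u = i)

/-- `G` admits a J-colouring with `k` colours. -/
def HasJCol {V : Type*} (G : SimpleGraph V) (k : ℕ) : Prop :=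
  ∃ c : V → Fin k, IsJCol G c

/-- The J-chromatic number: the maximum number of colours in a J-colouring. -/
noncomputable def Jnum {V : Type*} (G : SimpleGraph V) : ℕ :=
  sSup {k | HasJCol G k}

/-- A proper colouring in which every internal vertex (degree ≥ 2) has its closed
neighbourhood meeting every colour class (a J*-colouring). -/
def IsJStarCol {V : Type*} (G : SimpleGraph V) {k : ℕ} (c : V → Fin k) : Prop :=
  (∀ u v, G.Adj u v → c u ≠ c v) ∧
  (∀ v : V, (∃ a b, a ≠ b ∧ G.Adj v a ∧ G.Adj v b) →
    ∀ i : Fin k, ∃ u, (u = v ∨ G.Adj v u) ∧ c u = i)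

/-- `G` admits a J*-colouring with `k` colours. -/
def HasJStarCol {V : Type*} (G : SimpleGraph V) (k : ℕ) : Prop :=
  ∃ c : V → Fin k, IsJStarCol G c

/-- The modified J-chromatic number. -/
noncomputable def JStarNum {V : Type*} (G : SimpleGraph V) : ℕ :=
  sSup {k | HasJStarCol G k}

/-- The middle graph `M(G)`: vertices are the vertices and edges of `G`; two edges are
adjacent iff they are incident in `G`, a vertex and an edge are adjacent iff incident,
and no two vertices of `G` are adjacent. -/
def middleGraph {V : Type*} (G : SimpleGraph V) : SimpleGraph (V ⊕ G.edgeSet) where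
  Adj x y :=
    match x, y with
    | Sum.inl _, Sum.inl _ => False
    | Sum.inl u, Sum.inr e => u ∈ (e : Sym2 V)
    | Sum.inr e, Sum.inl u => u ∈ (e : Sym2 V)
    | Sum.inr e, Sum.inr f => e ≠ f ∧ ∃ u, u ∈ (e : Sym2 V) ∧ u ∈ (f : Sym2 V)
  symm := by
    constructor
    rintro (u | e) (v | f) h
    · exact h
    · exact h
    · exact h
    · exact ⟨h.1.symm, by obtain ⟨_, hu, hf⟩ := h.2; exact ⟨_, hf, hu⟩⟩
  loopless := by constructor; rintro (u | e) h
                 · exact h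
                 · exact h.1 rfl

/-- For `n ≥ 3`, the middle graph of the path `P_n` admits no J-colouring. -/
theorem middleGraph_path_no_JCol (n : ℕ) (hn : 3 ≤ n) :
    ¬∃ k, HasJCol (middleGraph (SimpleGraph.pathGraph n)) k := by
  rintro ⟨k, c, hprop, hdom⟩
  let G := SimpleGraph.pathGraph n
  have hG : G = SimpleGraph.pathGraph n := rfl
  have h0 : (0:ℕ) < n := by omega
  have h1 : (1:ℕ) < n := by omega
  have h2 : (2:ℕ) < n := by omega
  set v0 : Fin n := ⟨0, h0⟩ with hv0
  set v1 : Fin n := ⟨1, h1⟩ with hv1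
  set v2 : Fin n := ⟨2, h2⟩ with hv2
  have hadj01 : G.Adj v0 v1 := by
    simp [hG, SimpleGraph.pathGraph_adj, hv0, hv1]
  have hadj12 : G.Adj v1 v2 := by
    simp [hG, SimpleGraph.pathGraph_adj, hv1, hv2]
  set e0 : G.edgeSet := ⟨s(v0, v1), G.mem_edgeSet.mpr hadj01⟩ with he0
  set e1 : G.edgeSet := ⟨s(v1, v2), G.mem_edgeSet.mpr hadj12⟩ with he1
  have hkey : ∀ e : G.edgeSet, v0 ∈ (e : Sym2 (Fin n)) → e = e0 := by
    rintro ⟨s, hs⟩ hmem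
    induction s using Sym2.inductionOn with
    | hf a b =>
      rw [SimpleGraph.mem_edgeSet, hG, SimpleGraph.pathGraph_adj] at hs
      rw [Sym2.mem_iff] at hmem
      apply Subtype.ext
      show s(a, b) = s(v0, v1)
      rcases hmem with rfl | rfl
      · rcases hs with h | h
        · have hb : b = v1 := Fin.ext (by simp [hv0, hv1] at h ⊢; omega)
          rw [hb]
        · exfalso; simp [hv0] at h
      · rcases hs with h | h
        · exfalso; simp [hv0] at h
        · have ha : a = v1 := Fin.ext (by simp [hv0, hv1] at h ⊢; omega)
          rw [ha, Sym2.eq_swap]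
  have hne01 : e0 ≠ e1 := by
    intro h
    have := congrArg Subtype.val h
    simp [he0, he1, Sym2.eq_iff, hv0, hv1, hv2, Fin.ext_iff] at this
  have A1 : (middleGraph G).Adj (Sum.inl v1) (Sum.inr e0) := by
    show v1 ∈ (e0 : Sym2 (Fin n)); simp [he0]
  have A2 : (middleGraph G).Adj (Sum.inl v1) (Sum.inr e1) := by
    show v1 ∈ (e1 : Sym2 (Fin n)); simp [he1]
  have A3 : (middleGraph G).Adj (Sum.inr e0) (Sum.inr e1) :=
    ⟨hne01, v1, by simp [he0], by simp [he1]⟩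
  have d1 := hprop _ _ A1
  have d2 := hprop _ _ A2
  have d3 := hprop _ _ A3
  have hcov : ∀ i : Fin k, i = c (Sum.inl v0) ∨ i = c (Sum.inr e0) := by
    intro i
    obtain ⟨u, hu, hcu⟩ := hdom (Sum.inl v0) i
    rcases hu with rfl | hadj
    · exact Or.inl hcu.symm
    · match u, hadj, hcu with
      | Sum.inl w, hadj, _ => exact absurd hadj (by simp [middleGraph])
      | Sum.inr e, hadj, hcu =>
        have he : e = e0 := hkey e hadj
        right; rw [← hcu, he]
  rcases hcov (c (Sum.inl v1)) with h1' | h1' <;>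
  rcases hcov (c (Sum.inr e0)) with h2' | h2' <;>
  rcases hcov (c (Sum.inr e1)) with h3' | h3' <;>
  first
    | exact d1 (h1'.trans h2'.symm)
    | exact d2 (h1'.trans h3'.symm)
    | exact d3 (h2'.trans h3'.symm)
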